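/- Let F : ℝ^m × ℝ^n → ℝ^p be a smooth Euclidean FCRE with constant c and constant rank r, and let ψ : ℝ^n → ℝ^n be a surjective isometry of the Euclidean metric such that F(x, ψ(y)) = F(x, y) for all (x, y). Fix (x, y) with F(x, y) = c and let H_y and H_{ψ(y)} denote the least-squares solution maps of F at (x, y) and at (x, ψ(y)), respectively. Then ‖DH_y(x)‖ = ‖DH_{ψ(y)}(x)‖ in operator norm; that is, the least-squares condition number of F at (x, y) equals that at (x, ψ(y)). -/

import Mathlib

open Filter Topology

lemma norm_slope_tendsto {E F : Type*} [NormedAddCommGroup E] [NormedSpace ℝ E]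
    [NormedAddCommGroup F] [NormedSpace ℝ F]
    {f : E → F} {L : E →L[ℝ] F} {x : E} (hf : HasFDerivAt f L x) (v : E) :
    Tendsto (fun t : ℝ => ‖f (x + t • v) - f x‖ / |t|) (𝓝[≠] (0:ℝ)) (𝓝 ‖L v‖) := by
  have hline : HasDerivAt (fun t : ℝ => x + t • v) v 0 := by
    simpa using ((hasDerivAt_id (0:ℝ)).smul_const v).const_add x
  have hg : HasDerivAt (fun t : ℝ => f (x + t • v)) (L v) 0 := by
    have hf' : HasFDerivAt f L (x + (0:ℝ) • v) := by simpa using hf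
    exact hf'.comp_hasDerivAt (x := 0) hline
  rw [hasDerivAt_iff_tendsto_slope] at hg
  have h2 := hg.norm
  refine h2.congr fun t => ?_
  simp [slope_def_field, slope, norm_smul, div_eq_inv_mul, abs_inv]


/-- The rank of a continuous linear map between real normed spaces. -/
noncomputable def clmRank {E F : Type*} [NormedAddCommGroup E] [NormedSpace ℝ E]
    [NormedAddCommGroup F] [NormedSpace ℝ F] (f : E →L[ℝ] F) : ℕ :=
  Module.finrank ℝ (LinearMap.range (f : E →ₗ[ℝ] F))

/-- If a Euclidean FCRE is invariant under a surjective isometry `ψ` of the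
output space, then the least-squares condition numbers at `(x, y)` and `(x, ψ(y))` agree. -/
theorem stmt7 {m n p : ℕ}
    (F : EuclideanSpace ℝ (Fin m) × EuclideanSpace ℝ (Fin n) → EuclideanSpace ℝ (Fin p))
    (c : EuclideanSpace ℝ (Fin p)) (r : ℕ)
    (hF : ContDiff ℝ ((⊤ : ℕ∞) : WithTop ℕ∞) F)
    (hfeas : ∀ x, ∃ y, F (x, y) = c)
    (hranky : ∀ x y, clmRank (fderiv ℝ (fun y' => F (x, y')) y) = r)
    (hrank : ∀ x y, clmRank (fderiv ℝ F (x, y)) = r)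
    (ψ : EuclideanSpace ℝ (Fin n) → EuclideanSpace ℝ (Fin n))
    (hψiso : Isometry ψ) (hψsurj : Function.Surjective ψ)
    (hinv : ∀ x y, F (x, ψ y) = F (x, y))
    (x : EuclideanSpace ℝ (Fin m)) (y : EuclideanSpace ℝ (Fin n))
    (hsol : F (x, y) = c)
    -- `H₁` is the least-squares solution map of `F` at `(x, y)`:
    (Xh₁ : Set (EuclideanSpace ℝ (Fin m))) (Yh₁ : Set (EuclideanSpace ℝ (Fin n)))
    (H₁ : EuclideanSpace ℝ (Fin m) → EuclideanSpace ℝ (Fin n))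
    (hXh₁ : IsOpen Xh₁) (hx₁ : x ∈ Xh₁) (hYh₁ : IsOpen Yh₁) (hy₁ : y ∈ Yh₁)
    (hH₁ : ContDiffOn ℝ ((⊤ : ℕ∞) : WithTop ℕ∞) H₁ Xh₁) (hH₁x : H₁ x = y)
    (hLS₁ : ∀ x' ∈ Xh₁, H₁ x' ∈ Yh₁ ∧ F (x', H₁ x') = c ∧
      ∀ y' ∈ Yh₁, F (x', y') = c → ‖H₁ x' - y‖ ≤ ‖y' - y‖)
    -- `H₂` is the least-squares solution map of `F` at `(x, ψ(y))`:
    (Xh₂ : Set (EuclideanSpace ℝ (Fin m))) (Yh₂ : Set (EuclideanSpace ℝ (Fin n)))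
    (H₂ : EuclideanSpace ℝ (Fin m) → EuclideanSpace ℝ (Fin n))
    (hXh₂ : IsOpen Xh₂) (hx₂ : x ∈ Xh₂) (hYh₂ : IsOpen Yh₂) (hy₂ : ψ y ∈ Yh₂)
    (hH₂ : ContDiffOn ℝ ((⊤ : ℕ∞) : WithTop ℕ∞) H₂ Xh₂) (hH₂x : H₂ x = ψ y)
    (hLS₂ : ∀ x' ∈ Xh₂, H₂ x' ∈ Yh₂ ∧ F (x', H₂ x') = c ∧
      ∀ y' ∈ Yh₂, F (x', y') = c → ‖H₂ x' - ψ y‖ ≤ ‖y' - ψ y‖) :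
    ‖fderiv ℝ H₁ x‖ = ‖fderiv ℝ H₂ x‖ := by
  classical
  -- the inverse of ψ
  set e : EuclideanSpace ℝ (Fin n) ≃ EuclideanSpace ℝ (Fin n) :=
    Equiv.ofBijective ψ ⟨hψiso.injective, hψsurj⟩ with he
  have hecoe : ∀ z, e z = ψ z := fun z => rfl
  have heapp : ∀ z, ψ (e.symm z) = z := fun z => e.apply_symm_apply z
  have hsymm_iso : Isometry (e.symm) := by
    refine Isometry.of_dist_eq fun a b => ?_
    have := hψiso.dist_eq (e.symm a) (e.symm b)
    rw [heapp, heapp] at this; exact this.symm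
  -- key: the two distance functions agree near x
  have hdiff₁ : DifferentiableAt ℝ H₁ x :=
    (hH₁.contDiffAt (hXh₁.mem_nhds hx₁)).differentiableAt (by simp)
  have hdiff₂ : DifferentiableAt ℝ H₂ x :=
    (hH₂.contDiffAt (hXh₂.mem_nhds hx₂)).differentiableAt (by simp)
  have hcont₁ : ContinuousAt H₁ x := hdiff₁.continuousAt
  have hcont₂ : ContinuousAt H₂ x := hdiff₂.continuousAt
  have h1 : ∀ᶠ x' in 𝓝 x, x' ∈ Xh₁ := hXh₁.mem_nhds hx₁
  have h2 : ∀ᶠ x' in 𝓝 x, x' ∈ Xh₂ := hXh₂.mem_nhds hx₂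
  have h3 : ∀ᶠ x' in 𝓝 x, ψ (H₁ x') ∈ Yh₂ := by
    have hc : ContinuousAt (fun x' => ψ (H₁ x')) x :=
      (hψiso.continuous.continuousAt).comp hcont₁
    have : Yh₂ ∈ 𝓝 (ψ (H₁ x)) := by rw [hH₁x]; exact hYh₂.mem_nhds hy₂
    exact hc this
  have h4 : ∀ᶠ x' in 𝓝 x, e.symm (H₂ x') ∈ Yh₁ := by
    have hc : ContinuousAt (fun x' => e.symm (H₂ x')) x :=
      (hsymm_iso.continuous.continuousAt).comp hcont₂
    have hy1' : e.symm (H₂ x) ∈ Yh₁ := by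
      rw [hH₂x]
      have : e.symm (ψ y) = y := by
        have := e.symm_apply_apply y
        simpa [hecoe] using this
      rw [this]; exact hy₁
    exact hc (hYh₁.mem_nhds hy1')
  have hev : ∀ᶠ x' in 𝓝 x, ‖H₁ x' - y‖ = ‖H₂ x' - ψ y‖ := by
    filter_upwards [h1, h2, h3, h4] with x' hx1' hx2' h3' h4'
    obtain ⟨m1, s1, min1⟩ := hLS₁ x' hx1'
    obtain ⟨m2, s2, min2⟩ := hLS₂ x' hx2'
    have hFsymm : F (x', e.symm (H₂ x')) = c := by
      have := hinv x' (e.symm (H₂ x'))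
      rw [heapp] at this
      rw [← this, s2]
    have ha : ‖H₁ x' - y‖ ≤ ‖e.symm (H₂ x') - y‖ := min1 _ h4' hFsymm
    have hb : ‖e.symm (H₂ x') - y‖ = ‖H₂ x' - ψ y‖ := by
      have := hψiso.dist_eq (e.symm (H₂ x')) y
      rw [heapp] at this
      simpa [dist_eq_norm] using this.symm
    have hFψ : F (x', ψ (H₁ x')) = c := by rw [hinv]; exact s1
    have hc' : ‖H₂ x' - ψ y‖ ≤ ‖ψ (H₁ x') - ψ y‖ := min2 _ h3' hFψ
    have hd : ‖ψ (H₁ x') - ψ y‖ = ‖H₁ x' - y‖ := by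
      have := hψiso.dist_eq (H₁ x') y
      simpa [dist_eq_norm] using this
    linarith [ha, hb ▸ ha, hc']
  -- directional derivatives have equal norms
  have hn : ∀ v, ‖fderiv ℝ H₁ x v‖ = ‖fderiv ℝ H₂ x v‖ := by
    intro v
    have t1 := norm_slope_tendsto hdiff₁.hasFDerivAt v
    have t2 := norm_slope_tendsto hdiff₂.hasFDerivAt v
    have hline : Tendsto (fun t : ℝ => x + t • v) (𝓝 0) (𝓝 x) := by
      have : Continuous (fun t : ℝ => x + t • v) := by continuity
      have h0 := this.continuousAt (x := (0:ℝ))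
      unfold ContinuousAt at h0
      simpa using h0
    have hev' : ∀ᶠ t in 𝓝[≠] (0:ℝ),
        ‖H₁ (x + t • v) - y‖ = ‖H₂ (x + t • v) - ψ y‖ :=
      (hline.eventually hev).filter_mono nhdsWithin_le_nhds
    have t1' : Tendsto (fun t : ℝ => ‖H₁ (x + t • v) - H₁ x‖ / |t|) (𝓝[≠] (0:ℝ))
        (𝓝 ‖fderiv ℝ H₂ x v‖) := by
      refine Tendsto.congr' ?_ t2
      filter_upwards [hev'] with t ht
      rw [hH₁x, hH₂x, ht]
    rw [hH₁x] at t1 t1'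
    exact tendsto_nhds_unique t1' t1 |>.symm
  refine le_antisymm ?_ ?_
  · refine (fderiv ℝ H₁ x).opNorm_le_bound (norm_nonneg _) fun v => ?_
    rw [hn v]; exact (fderiv ℝ H₂ x).le_opNorm v
  · refine (fderiv ℝ H₂ x).opNorm_le_bound (norm_nonneg _) fun v => ?_
    rw [← hn v]; exact (fderiv ℝ H₁ x).le_opNorm v
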